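/- Let Δ be a finite abstract simplicial complex on a finite vertex set V and let κ : V → {1,…,k} be a k-linear coloring of Δ. Then there exists a representative subcomplex of Δ with respect to κ, i.e., a subcomplex Δ_κ ⊆ Δ such that for each i ∈ {1,…,k} there is exactly one vertex y of Δ_κ with κ(y) = i, and for every pair of vertices x of Δ and y of Δ_κ with κ(x) = κ(y) one has F(x) ⊆ F(y). -/
import Mathlib


open Finset Function

variable {V : Type} [Fintype V] [DecidableEq V]

/-- A finite abstract simplicial complex on the vertex set `V`: a collection of
finite subsets of `V` closed under taking subsets, containing every singleton. -/
def IsComplex (Δ : Finset (Finset V)) : Prop :=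
  (∀ S ∈ Δ, ∀ T ⊆ S, T ∈ Δ) ∧ ∀ v : V, ({v} : Finset V) ∈ Δ

/-- `F` is a facet of `Δ`, i.e. a face maximal under inclusion. -/
def IsFacet (Δ : Finset (Finset V)) (F : Finset V) : Prop :=
  F ∈ Δ ∧ ∀ G ∈ Δ, F ⊆ G → F = G

/-- `F(v)`: the set of facets of `Δ` containing the vertex `v`. -/
def facetsOf (Δ : Finset (Finset V)) (v : V) : Set (Finset V) :=
  {F | IsFacet Δ F ∧ v ∈ F}

/-- A surjective map `κ : V → {1,…,k}` is a `k`-linear coloring of `Δ` if for every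
pair of vertices with the same color the facet sets are comparable by inclusion. -/
def IsLinearColoring {k : ℕ} (Δ : Finset (Finset V)) (κ : V → Fin k) : Prop :=
  Surjective κ ∧
  ∀ u v : V, κ u = κ v →
    facetsOf Δ u ⊆ facetsOf Δ v ∨ facetsOf Δ v ⊆ facetsOf Δ u

/-- `Δκ` is a representative subcomplex of `Δ` with respect to the linear coloring `κ`:
it is a subcomplex of `Δ`, for each color `i` it has exactly one vertex of color `i`,
and whenever `x` is a vertex of `Δ` and `y` a vertex of `Δκ` of the same color,
`F(x) ⊆ F(y)`. -/
def IsRepresentative {k : ℕ} (Δ Δκ : Finset (Finset V)) (κ : V → Fin k) : Prop :=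
  Δκ ⊆ Δ ∧ (∀ S ∈ Δκ, ∀ T ⊆ S, T ∈ Δκ) ∧
  (∀ i : Fin k, ∃! y : V, ({y} : Finset V) ∈ Δκ ∧ κ y = i) ∧
  ∀ x y : V, ({y} : Finset V) ∈ Δκ → κ x = κ y → facetsOf Δ x ⊆ facetsOf Δ y

lemma exists_top {α : Type*} [DecidableEq α] (r : α → α → Prop) (hr : Transitive r)
    (s : Finset α) (htot : ∀ a ∈ s, ∀ b ∈ s, r a b ∨ r b a) (hs : s.Nonempty) :
    ∃ y ∈ s, ∀ x ∈ s, r x y := by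
  induction s using Finset.induction_on with
  | empty => exact absurd hs (by simp)
  | @insert a t ha ih =>
    rcases t.eq_empty_or_nonempty with rfl | ht
    · exact ⟨a, by simp, by
        intro x hx
        simp only [Finset.mem_insert, Finset.notMem_empty, or_false] at hx
        subst hx
        rcases htot x (by simp) x (by simp) with h | h <;> exact h⟩
    · obtain ⟨z, hz, hzt⟩ := ih (fun u hu v hv =>
        htot u (Finset.mem_insert_of_mem hu) v (Finset.mem_insert_of_mem hv)) ht
      rcases htot a (Finset.mem_insert_self a t) z (Finset.mem_insert_of_mem hz) with h | h
      · refine ⟨z, Finset.mem_insert_of_mem hz, ?_⟩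
        intro x hx
        rcases Finset.mem_insert.mp hx with rfl | hx
        · exact h
        · exact hzt x hx
      · refine ⟨a, Finset.mem_insert_self a t, ?_⟩
        intro x hx
        rcases Finset.mem_insert.mp hx with rfl | hx
        · rcases htot x (Finset.mem_insert_self x t) x (Finset.mem_insert_self x t)
            with h' | h' <;> exact h'
        · exact hr (hzt x hx) h

/-- Every linearly colored complex has a representative subcomplex. -/
theorem stmt_6 {k : ℕ} (Δ : Finset (Finset V)) (hΔ : IsComplex Δ)
    (κ : V → Fin k) (hκ : IsLinearColoring Δ κ) :
    ∃ Δκ : Finset (Finset V), IsRepresentative Δ Δκ κ := by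
  obtain ⟨hsurj, hlin⟩ := hκ
  rcases Nat.eq_zero_or_pos k with hk | hk
  · refine ⟨∅, ?_, ?_, ?_, ?_⟩ <;> simp
    · intro i; exact absurd i.2 (by omega)
  -- choose a top vertex for each color
  have hmax : ∀ i : Fin k, ∃ y : V, κ y = i ∧
      ∀ x : V, κ x = i → facetsOf Δ x ⊆ facetsOf Δ y := by
    intro i
    obtain ⟨y0, hy0⟩ := hsurj i
    obtain ⟨y, hy, htop⟩ := exists_top (fun a b => facetsOf Δ a ⊆ facetsOf Δ b)
      (fun a b c hab hbc => hab.trans hbc)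
      (Finset.univ.filter (fun v => κ v = i))
      (by
        intro a ha b hb
        simp only [Finset.mem_filter] at ha hb
        exact hlin a b (ha.2.trans hb.2.symm))
      ⟨y0, by simp [hy0]⟩
    simp only [Finset.mem_filter] at hy
    exact ⟨y, hy.2, fun x hx => htop x (by simp [hx])⟩
  choose y hy1 hy2 using hmax
  obtain ⟨v0⟩ : Nonempty V := ⟨y ⟨0, hk⟩⟩
  have hempty : (∅ : Finset V) ∈ Δ := hΔ.1 _ (hΔ.2 v0) _ (Finset.empty_subset _)
  refine ⟨insert ∅ ((Finset.univ : Finset (Fin k)).image fun i => ({y i} : Finset V)),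
    ?_, ?_, ?_, ?_⟩
  · intro S hS
    simp only [Finset.mem_insert, Finset.mem_image, Finset.mem_univ, true_and] at hS
    rcases hS with rfl | ⟨i, rfl⟩
    · exact hempty
    · exact hΔ.2 (y i)
  · intro S hS T hT
    simp only [Finset.mem_insert, Finset.mem_image, Finset.mem_univ, true_and] at hS ⊢
    rcases hS with rfl | ⟨i, rfl⟩
    · exact Or.inl (Finset.subset_empty.mp hT)
    · rcases Finset.subset_singleton_iff.mp hT with rfl | rfl
      · exact Or.inl rfl
      · exact Or.inr ⟨i, rfl⟩
  · intro i
    refine ⟨y i, ⟨by simp, hy1 i⟩, ?_⟩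
    rintro z ⟨hz, rfl⟩
    simp only [Finset.mem_insert, Finset.mem_image, Finset.mem_univ, true_and] at hz
    rcases hz with h | ⟨j, hj⟩
    · exact absurd h (by simp)
    · have : z = y j := Finset.singleton_injective hj.symm
      subst this
      rw [hy1 j]
  · intro x z hz hxz
    simp only [Finset.mem_insert, Finset.mem_image, Finset.mem_univ, true_and] at hz
    rcases hz with h | ⟨j, hj⟩
    · exact absurd h (by simp)
    · have : z = y j := Finset.singleton_injective hj.symm
      subst this
      exact hy2 j x (hxz.trans (hy1 j))
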